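/- Let α ≥ 0, ε > 0, T > 0, ν₁ > 0 and C₁, C₂, C₃, F ≥ 0 be real numbers. Set δ := √(2+α)·exp(−εT/(2+α)) and D := 1 − δ − (C₂/ν₁)·(1 + F), and assume D > 0. Define R_cr := (C₁·F + (C₃/ν₁)·F²)/D and assume 0 < R_cr < 1. Then for every R with R_cr ≤ R < 1 and every x with 0 ≤ x ≤ R, one has C₁·F + (C₂/ν₁)·x²·(1 + F) + (C₃/ν₁)·F² + δ·x ≤ R. -/

import Mathlib

/-- The Poincaré map estimate: with `δ = √(2+α)·exp(-εT/(2+α))`,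
`D = 1 - δ - (C₂/ν₁)(1+F) > 0` and `R_cr = (C₁F + (C₃/ν₁)F²)/D ∈ (0,1)`,
for every `R ∈ [R_cr, 1)` and every `x ∈ [0, R]` one has
`C₁F + (C₂/ν₁)x²(1+F) + (C₃/ν₁)F² + δx ≤ R`. -/
theorem poincare_map_ball_invariance
    (α ε T ν₁ C₁ C₂ C₃ F : ℝ)
    (hα : 0 ≤ α) (hε : 0 < ε) (hT : 0 < T) (hν₁ : 0 < ν₁)
    (hC₁ : 0 ≤ C₁) (hC₂ : 0 ≤ C₂) (hC₃ : 0 ≤ C₃) (hF : 0 ≤ F)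
    (δ D R_cr : ℝ)
    (hδ : δ = Real.sqrt (2 + α) * Real.exp (-ε * T / (2 + α)))
    (hD : D = 1 - δ - (C₂ / ν₁) * (1 + F))
    (hD_pos : 0 < D)
    (hR_cr : R_cr = (C₁ * F + (C₃ / ν₁) * F ^ 2) / D)
    (hR_cr_pos : 0 < R_cr) (hR_cr_lt : R_cr < 1) :
    ∀ R, R_cr ≤ R → R < 1 → ∀ x, 0 ≤ x → x ≤ R →
      C₁ * F + (C₂ / ν₁) * x ^ 2 * (1 + F) + (C₃ / ν₁) * F ^ 2 + δ * x ≤ R := by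
  intro R hRl hRu x hx0 hxR
  have hδ0 : 0 ≤ δ := by
    rw [hδ]; positivity
  have hcoef : 0 ≤ C₂ / ν₁ * (1 + F) := by positivity
  have hN : C₁ * F + (C₃ / ν₁) * F ^ 2 = R_cr * D := by
    rw [hR_cr, div_mul_cancel₀ _ hD_pos.ne']
  have hND : C₁ * F + (C₃ / ν₁) * F ^ 2 ≤ R * D := by
    rw [hN]; exact mul_le_mul_of_nonneg_right hRl hD_pos.le
  have hx2 : x ^ 2 ≤ R * x := by nlinarith
  nlinarith [mul_le_mul_of_nonneg_left hxR hcoef,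
    mul_le_mul_of_nonneg_right (le_of_lt hRu) (mul_nonneg hcoef hx0)]
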